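/- Let {λ_n}_{n=1}^N and {μ_n}_{n=1}^N be nonincreasing real sequences such that {λ_n}_{n=1}^N majorizes {μ_n}_{n=1}^N. Then there exists an N×N Hermitian complex matrix G whose eigenvalues, counted with multiplicity, are exactly {λ_n}_{n=1}^N and whose (n,n) diagonal entry equals μ_n for every n = 1,…,N. -/

import Mathlib

open Matrix Polynomial


open Matrix Polynomial in
lemma horn_charpoly_conj {R : Type*} [CommRing R] {n : Type*} [DecidableEq n] [Fintype n]
    (Q M Q' : Matrix n n R) (h1 : Q * Q' = 1) :
    (Q * M * Q').charpoly = M.charpoly := by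
  have hmap : ∀ (A B : Matrix n n R), (A * B).map (C : R →+* R[X]) = A.map C * B.map C :=
    fun A B => Matrix.map_mul
  have hone : Q.map (C : R →+* R[X]) * Q'.map C = 1 := by
    rw [← hmap, h1]; ext i j; simp [Matrix.one_apply, apply_ite]
  have key : charmatrix (Q * M * Q') = Q.map C * charmatrix M * Q'.map C := by
    simp only [charmatrix, RingHom.mapMatrix_apply, Matrix.mul_sub, Matrix.sub_mul]
    congr 1
    · rw [Matrix.scalar_apply, ← Matrix.smul_one_eq_diagonal, Matrix.mul_smul,
        Matrix.smul_mul, Matrix.mul_one, hone]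
    · rw [← hmap, ← hmap]
  rw [Matrix.charpoly, Matrix.charpoly, key, Matrix.det_mul, Matrix.det_mul]
  have hd : (Q.map (C : R →+* R[X])).det * (Q'.map C).det = 1 := by
    rw [← Matrix.det_mul, hone, Matrix.det_one]
  calc (Q.map (C : R →+* R[X])).det * (charmatrix M).det * (Q'.map C).det
      = ((Q.map (C : R →+* R[X])).det * (Q'.map C).det) * (charmatrix M).det := by ring
    _ = (charmatrix M).det := by rw [hd, one_mul]

open Matrix Polynomial in
lemma horn_charpoly_diagonal {R : Type*} [CommRing R] {n : Type*} [DecidableEq n] [Fintype n]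
    (d : n → R) : (Matrix.diagonal d).charpoly = ∏ i, (X - C (d i)) := by
  have : charmatrix (Matrix.diagonal d) = Matrix.diagonal (fun i => X - C (d i)) := by
    ext i j
    rcases eq_or_ne i j with rfl | h
    · simp
    · simp [h, Matrix.diagonal_apply_ne _ h]
  rw [Matrix.charpoly, this, Matrix.det_diagonal]

lemma horn_multiset_ofFn {α : Type*} {n : ℕ} (f : Fin n → α) :
    (Finset.univ.val.map f : Multiset α) = (List.ofFn f : Multiset α) := by
  rw [Fin.univ_def]
  simp [List.ofFn_eq_map]

lemma horn_exists_perm {n : ℕ} (f g : Fin n → ℝ)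
    (h : (Finset.univ.val.map f : Multiset ℝ) = Finset.univ.val.map g) :
    ∃ σ : Equiv.Perm (Fin n), ∀ i, f i = g (σ i) := by
  set σf := Tuple.sort f
  set σg := Tuple.sort g
  have hperm : List.Perm (List.ofFn (f ∘ σf)) (List.ofFn (g ∘ σg)) := by
    refine (σf.ofFn_comp_perm f).trans (List.Perm.trans ?_ (σg.ofFn_comp_perm g).symm)
    rw [← Multiset.coe_eq_coe, ← horn_multiset_ofFn, ← horn_multiset_ofFn, h]
  have heq : f ∘ σf = g ∘ σg := by
    apply List.ofFn_injective
    exact List.Perm.eq_of_sortedLE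
      (Tuple.monotone_sort f).sortedLE_ofFn (Tuple.monotone_sort g).sortedLE_ofFn hperm
  refine ⟨σf.symm.trans σg, fun i => ?_⟩
  have := congrFun heq (σf.symm i)
  simpa using this

open Matrix

lemma horn_conj_diag_apply {n : ℕ} (Q : Matrix (Fin n) (Fin n) ℝ) (d : Fin n → ℝ) (a b : Fin n) :
    (Q * Matrix.diagonal d * Qᵀ) a b = ∑ m, d m * (Q a m * Q b m) := by
  rw [Matrix.mul_apply]
  refine Finset.sum_congr rfl fun m _ => ?_
  rw [Matrix.mul_apply, Finset.sum_eq_single m (by intro x _ hx; simp [Matrix.diagonal_apply_ne _ hx]) (by simp)]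
  simp [Matrix.transpose_apply]
  ring

lemma horn_exists_cs {x y m : ℝ} (hxy : y ≤ m) (hmx : m ≤ x) :
    ∃ c s : ℝ, c ^ 2 + s ^ 2 = 1 ∧ c ^ 2 * x + s ^ 2 * y = m := by
  rcases eq_or_lt_of_le (hxy.trans hmx) with heq | hlt
  · exact ⟨1, 0, by norm_num, by nlinarith⟩
  · have hd : (0:ℝ) < x - y := by linarith
    refine ⟨Real.sqrt ((m - y) / (x - y)), Real.sqrt ((x - m) / (x - y)), ?_, ?_⟩ <;>
    · rw [Real.sq_sqrt (div_nonneg (by linarith) hd.le),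
        Real.sq_sqrt (div_nonneg (by linarith) hd.le)]
      field_simp
      try ring

open Matrix

lemma horn_sum_double_if {n : ℕ} (a b : Fin n) (hab : a ≠ b) (X Y : ℝ) :
    ∑ x, (if x = a then X else if x = b then Y else 0) = X + Y := by
  have : ∀ x : Fin n, (if x = a then X else if x = b then Y else 0)
      = (if x = a then X else 0) + (if x = b then Y else 0) := by
    intro x
    split_ifs with h1 h2 <;> simp_all
  rw [Finset.sum_congr rfl (fun x _ => this x), Finset.sum_add_distrib]
  simp

lemma horn_triple_mul_apply {n m : ℕ} (W : Matrix (Fin n) (Fin m) ℝ)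
    (A : Matrix (Fin m) (Fin m) ℝ) (a b : Fin n) :
    (W * A * Wᵀ) a b = ∑ i, ∑ j, W a i * A i j * W b j := by
  rw [Matrix.mul_apply]
  rw [Finset.sum_comm]
  refine Finset.sum_congr rfl fun j _ => ?_
  rw [Matrix.mul_apply, Finset.sum_mul]
  refine Finset.sum_congr rfl fun i _ => ?_
  simp [Matrix.transpose_apply]

open Matrix

lemma horn_main (N : ℕ) : ∀ (lam mu : ℕ → ℝ),
    (∀ i j, i ≤ j → j < N → lam j ≤ lam i) →
    (∀ i j, i ≤ j → j < N → mu j ≤ mu i) →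
    (∀ j, j ≤ N → ∑ i ∈ Finset.range j, mu i ≤ ∑ i ∈ Finset.range j, lam i) →
    (∑ i ∈ Finset.range N, lam i = ∑ i ∈ Finset.range N, mu i) →
    ∃ Q : Matrix (Fin N) (Fin N) ℝ, Qᵀ * Q = 1 ∧
      ∀ n : Fin N, (Q * Matrix.diagonal (fun i : Fin N => lam i) * Qᵀ) n n = mu n := by
  induction N with
  | zero => exact fun lam mu _ _ _ _ => ⟨1, by simp, fun n => n.elim0⟩
  | succ N IH =>
    intro lam mu hlam hmu hsum heq
    by_cases hcase : ∀ j, j < N + 1 → mu 0 ≤ lam j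
    · -- pointwise equal case
      have hge : ∀ i ∈ Finset.range (N+1), 0 ≤ lam i - mu i := by
        intro i hi
        rw [Finset.mem_range] at hi
        have h1 : mu i ≤ mu 0 := hmu 0 i (Nat.zero_le _) hi
        have h2 : mu 0 ≤ lam i := hcase i hi
        linarith
      have hzero : ∑ i ∈ Finset.range (N+1), (lam i - mu i) = 0 := by
        rw [Finset.sum_sub_distrib, heq, sub_self]
      have hpt : ∀ i ∈ Finset.range (N+1), lam i - mu i = 0 :=
        (Finset.sum_eq_zero_iff_of_nonneg hge).mp hzero
      refine ⟨1, by simp, fun n => ?_⟩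
      have : lam (n : ℕ) = mu (n : ℕ) := by
        have := hpt n (Finset.mem_range.mpr n.isLt); linarith
      simp [Matrix.transpose_one, Matrix.diagonal_apply_eq, this]
    · push_neg at hcase
      classical
      have hP : ∃ j, j < N + 1 ∧ lam j < mu 0 := by
        obtain ⟨j, hj1, hj2⟩ := hcase; exact ⟨j, hj1, hj2⟩
      obtain ⟨hj0N, hj0⟩ := Nat.find_spec hP
      set j0 := Nat.find hP with hj0def
      have hmu00 : mu 0 ≤ lam 0 := by
        have := hsum 1 (by omega)
        simpa using this
      have hj0pos : 0 < j0 := by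
        rcases Nat.eq_zero_or_pos j0 with h0 | h
        · exfalso; rw [h0] at hj0; linarith
        · exact h
      set k := j0 - 1 with hkdef
      have hk1 : k + 1 = j0 := by omega
      have hkN : k + 1 ≤ N := by omega
      have hmuk : mu 0 ≤ lam k := by
        have hmin := Nat.find_min hP (show k < j0 by omega)
        push_neg at hmin
        by_contra hcon
        push_neg at hcon
        exact absurd (hmin (by omega)) (not_le.mpr hcon)
      have hlamk1 : lam (k+1) < mu 0 := by rw [hk1]; exact hj0
      set ρ := lam k + lam (k+1) - mu 0 with hrho
      set lam' : ℕ → ℝ := fun i => if i < k then lam i else if i = k then ρ else lam (i+1)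
        with hlam'def
      set mu' : ℕ → ℝ := fun i => mu (i+1) with hmu'def
      have hl1 : ∀ i, i < k → lam' i = lam i := fun i h => if_pos h
      have hl2 : lam' k = ρ := by simp [hlam'def]
      have hl3 : ∀ i, k < i → lam' i = lam (i+1) := by
        intro i h; simp only [hlam'def]; rw [if_neg (by omega), if_neg (by omega)]
      have hρ1 : lam (k+1) ≤ ρ := by simp only [hrho]; linarith
      have hρ2 : ρ ≤ lam k := by simp only [hrho]; linarith
      -- sortedness of lam'
      have hlam' : ∀ i j, i ≤ j → j < N → lam' j ≤ lam' i := by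
        intro i j hij hjN
        rcases lt_trichotomy j k with hj | hj | hj
        · rw [hl1 j hj, hl1 i (by omega)]
          exact hlam i j hij (by omega)
        · subst hj
          rcases lt_or_eq_of_le hij with hi | hi
          · rw [hl1 i hi, hl2]
            exact hρ2.trans (hlam i k hij (by omega))
          · rw [hi]
            
        · rw [hl3 j hj]
          rcases lt_trichotomy i k with hi | hi | hi
          · rw [hl1 i hi]
            exact hlam i (j+1) (by omega) (by omega)
          · rw [hi, hl2]
            exact (hlam (k+1) (j+1) (by omega) (by omega)).trans hρ1
          · rw [hl3 i hi]
            exact hlam (i+1) (j+1) (by omega) (by omega)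
      have hmu' : ∀ i j, i ≤ j → j < N → mu' j ≤ mu' i := by
        intro i j hij hjN
        exact hmu (i+1) (j+1) (by omega) (by omega)
      -- sum identities
      have hSmu' : ∀ j, ∑ i ∈ Finset.range j, mu' i = ∑ i ∈ Finset.range (j+1), mu i - mu 0 := by
        intro j
        rw [Finset.sum_range_succ' mu j]
        simp [hmu'def]
      have hSlam'le : ∀ j, j ≤ k → ∑ i ∈ Finset.range j, lam' i = ∑ i ∈ Finset.range j, lam i := by
        intro j hj
        refine Finset.sum_congr rfl fun i hi => ?_
        rw [Finset.mem_range] at hi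
        exact hl1 i (by omega)
      have hSlam'ge : ∀ j, k + 1 ≤ j →
          ∑ i ∈ Finset.range j, lam' i = ∑ i ∈ Finset.range (j+1), lam i - mu 0 := by
        intro j hj
        induction j, hj using Nat.le_induction with
        | base =>
          rw [Finset.sum_range_succ, hSlam'le k le_rfl, hl2,
            Finset.sum_range_succ, Finset.sum_range_succ]
          ring
        | succ j hj IH2 =>
          rw [Finset.sum_range_succ, IH2, hl3 j (by omega), Finset.sum_range_succ lam (j+1)]
          ring
      have hsum' : ∀ j, j ≤ N → ∑ i ∈ Finset.range j, mu' i ≤ ∑ i ∈ Finset.range j, lam' i := by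
        intro j hj
        rw [hSmu']
        by_cases hjk : j ≤ k
        · rw [hSlam'le j hjk]
          have h1 : ∑ i ∈ Finset.range j, mu i ≤ ∑ i ∈ Finset.range j, lam i :=
            hsum j (by omega)
          have h2 : mu j ≤ mu 0 := hmu 0 j (by omega) (by omega)
          rw [Finset.sum_range_succ]
          linarith
        · rw [hSlam'ge j (by omega)]
          have := hsum (j+1) (by omega)
          linarith
      have heq' : ∑ i ∈ Finset.range N, lam' i = ∑ i ∈ Finset.range N, mu' i := by
        rw [hSlam'ge N hkN, hSmu', heq]
      obtain ⟨Q', hQ'o, hQ'd⟩ := IH lam' mu' hlam' hmu' hsum' heq'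
      have hQ'o' : Q' * Q'ᵀ = 1 := mul_eq_one_comm.mp hQ'o
      -- Fin set-up
      have hkltN : k < N := by omega
      set p : Fin N := ⟨k, hkltN⟩ with hpdef
      set κ : Fin (N+1) := p.castSucc with hκdef
      set κ' : Fin (N+1) := p.succ with hκ'def
      have hκκ' : κ ≠ κ' := ne_of_lt (Fin.castSucc_lt_succ (i := p))
      have hκcoe : (κ : ℕ) = k := rfl
      have hκ'coe : (κ' : ℕ) = k + 1 := rfl
      set e : Fin N → Fin (N+1) := κ.succAbove with hedef
      have he_ne : ∀ i, e i ≠ κ := fun i => Fin.succAbove_ne κ i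
      have he_inj : Function.Injective e := Fin.succAbove_right_injective
      have hpinv : ∀ i, p.predAbove (e i) = i := fun i => Fin.predAbove_succAbove p i
      have hepinv : ∀ b : Fin (N+1), b ≠ κ → e (p.predAbove b) = b := fun b hb =>
        Fin.succAbove_predAbove hb
      have hesurj : ∀ b : Fin (N+1), b ≠ κ → ∃ i, e i = b := fun b hb =>
        ⟨p.predAbove b, hepinv b hb⟩
      have hecoe : ∀ j : Fin N, ((e j : ℕ)) = if (j:ℕ) < k then (j:ℕ) else (j:ℕ)+1 := by
        intro j
        have hpcoe : (p : ℕ) = k := rfl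
        by_cases h : (j:ℕ) < k
        · rw [if_pos h, hedef, Fin.succAbove_of_castSucc_lt _ _ (by
            rw [hκdef, Fin.castSucc_lt_castSucc_iff, Fin.lt_def]
            omega)]
          simp
        · rw [if_neg h, hedef, Fin.succAbove_of_le_castSucc _ _ (by
            rw [hκdef, Fin.castSucc_le_castSucc_iff, Fin.le_def]
            omega)]
          simp
      have heκ' : ∀ j : Fin N, e j = κ' ↔ (j:ℕ) = k := by
        intro j
        constructor
        · intro h
          have h2 := congrArg (Fin.val) h
          rw [hecoe, hκ'coe] at h2
          split_ifs at h2 <;> omega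
        · intro h
          apply Fin.ext
          rw [hecoe, hκ'coe, h, if_neg (by omega)]
      have hlamval : ∀ i : Fin N, e i ≠ κ' → lam ((e i : ℕ)) = lam' ((i : ℕ)) := by
        intro i h
        have hik : (i:ℕ) ≠ k := fun hh => h ((heκ' i).mpr hh)
        by_cases hlt : (i:ℕ) < k
        · rw [hecoe, if_pos hlt, hl1 _ hlt]
        · rw [hecoe, if_neg hlt, hl3 _ (by omega)]
      -- rotation coefficients
      obtain ⟨c, s, hcs1, hcs2⟩ := horn_exists_cs hlamk1.le hmuk
      -- the three matrices
      set R : Matrix (Fin (N+1)) (Fin (N+1)) ℝ := Matrix.of fun a b =>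
        if a = κ then (if b = κ then c else if b = κ' then s else 0)
        else if a = κ' then (if b = κ then -s else if b = κ' then c else 0)
        else if a = b then 1 else 0 with hRdef
      set W : Matrix (Fin (N+1)) (Fin (N+1)) ℝ := Matrix.of fun a b =>
        if a = κ then (if b = κ then 1 else 0)
        else if b = κ then 0 else Q' (p.predAbove a) (p.predAbove b) with hWdef
      set D : Matrix (Fin (N+1)) (Fin (N+1)) ℝ :=
        Matrix.diagonal (fun i : Fin (N+1) => lam (i : ℕ)) with hDdef
      set A : Matrix (Fin (N+1)) (Fin (N+1)) ℝ := R * D * Rᵀ with hAdef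
      -- rows of R
      have hRκ : ∀ m, R κ m = if m = κ then c else if m = κ' then s else 0 := by
        intro m; simp [hRdef]
      have hRκ' : ∀ m, R κ' m = if m = κ then -s else if m = κ' then c else 0 := by
        intro m; simp [hRdef, hκκ'.symm]
      have hRrow : ∀ a, a ≠ κ → a ≠ κ' → ∀ m, R a m = if m = a then 1 else 0 := by
        intro a h1 h2 m
        simp only [hRdef, Matrix.of_apply, if_neg h1, if_neg h2]
        by_cases h : a = m
        · rw [if_pos h, if_pos h.symm]
        · rw [if_neg h, if_neg (Ne.symm h)]
      -- rows of W
      have hWκ : ∀ m, W κ m = if m = κ then 1 else 0 := by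
        intro m; simp [hWdef]
      have hWe : ∀ i m, W (e i) m = if m = κ then 0 else Q' i (p.predAbove m) := by
        intro i m
        simp only [hWdef, Matrix.of_apply, if_neg (he_ne i), hpinv]
      have hWee : ∀ i j, W (e i) (e j) = Q' i j := by
        intro i j
        rw [hWe, if_neg (he_ne j), hpinv]
      -- entries of A
      have hAκκ : A κ κ = mu 0 := by
        rw [hAdef, hDdef, horn_conj_diag_apply]
        have hpt : ∀ m : Fin (N+1), lam ((m : ℕ)) * (R κ m * R κ m)
            = (if m = κ then lam k * (c*c) else if m = κ' then lam (k+1) * (s*s) else 0) := by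
          intro m
          rw [hRκ]
          split_ifs with h1 h2
          · subst h1; rw [hκcoe]
          · subst h2; rw [hκ'coe]
          · ring
        rw [Finset.sum_congr rfl (fun m _ => hpt m), horn_sum_double_if κ κ' hκκ']
        linear_combination hcs2
      have hAee : ∀ i j : Fin N, A (e i) (e j)
          = Matrix.diagonal (fun i : Fin N => lam' ((i : ℕ))) i j := by
        intro i j
        rw [hAdef, hDdef, horn_conj_diag_apply]
        by_cases hi : e i = κ' <;> by_cases hj : e j = κ'
        · -- both on the rotated slot
          have hij : i = j := he_inj (hi.trans hj.symm)
          subst hij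
          have hik : (i : ℕ) = k := (heκ' i).mp hi
          have hpt : ∀ m : Fin (N+1), lam ((m : ℕ)) * (R (e i) m * R (e i) m)
              = (if m = κ then lam k * (s*s) else if m = κ' then lam (k+1) * (c*c) else 0) := by
            intro m
            rw [hi, hRκ']
            split_ifs with h1 h2
            · subst h1; rw [hκcoe]; ring
            · subst h2; rw [hκ'coe]
            · ring
          rw [Finset.sum_congr rfl (fun m _ => hpt m), horn_sum_double_if κ κ' hκκ',
            Matrix.diagonal_apply_eq, hik, hl2]
          linear_combination (lam k + lam (k+1)) * hcs1 - hcs2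
        · -- i on the slot, j off it : zero
          have hij : i ≠ j := fun hh => hj (hh ▸ hi)
          rw [Matrix.diagonal_apply_ne _ hij]
          refine Finset.sum_eq_zero fun m _ => ?_
          rw [hi, hRκ', hRrow (e j) (he_ne j) hj]
          split_ifs with h1 h2 h3 h4 h5
          · exact absurd (h2.symm.trans h1) (he_ne j)
          · ring
          · exact absurd (h4.symm.trans h3) hj
          · ring
          · ring
          · ring
        · have hij : i ≠ j := fun hh => hi (hh ▸ hj)
          rw [Matrix.diagonal_apply_ne _ hij]
          refine Finset.sum_eq_zero fun m _ => ?_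
          rw [hj, hRκ', hRrow (e i) (he_ne i) hi]
          split_ifs with h1 h2 h3 h4 h5
          · exact absurd (h1.symm.trans h2) (he_ne i)
          · exact absurd (h1.symm.trans h3) hi
          · ring
          · ring
          · ring
          · ring
        · -- both off the slot
          rw [Finset.sum_eq_single (e i) ?_ (by simp)]
          · rw [hRrow (e i) (he_ne i) hi, hRrow (e j) (he_ne j) hj,
              if_pos rfl]
            by_cases hij : i = j
            · subst hij
              rw [if_pos rfl, Matrix.diagonal_apply_eq, hlamval i hi]
              ring
            · rw [if_neg (fun hh => hij (he_inj hh)), Matrix.diagonal_apply_ne _ hij]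
              ring
          · intro m _ hm
            rw [hRrow (e i) (he_ne i) hi, if_neg hm]
            ring
      -- entries of B := W * A * Wᵀ
      have hBκκ : (W * A * Wᵀ) κ κ = mu 0 := by
        rw [horn_triple_mul_apply]
        rw [Finset.sum_eq_single κ ?_ (by simp)]
        · rw [Finset.sum_eq_single κ ?_ (by simp)]
          · rw [hWκ, if_pos rfl, hAκκ]; ring
          · intro n _ hn
            rw [hWκ n, if_neg hn]; ring
        · intro m _ hm
          refine Finset.sum_eq_zero fun n _ => ?_
          rw [hWκ, if_neg hm]; ring
      have hBee : ∀ i : Fin N, (W * A * Wᵀ) (e i) (e i) = mu ((i : ℕ) + 1) := by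
        intro i
        rw [horn_triple_mul_apply]
        rw [Fin.sum_univ_succAbove _ κ]
        have hz : (∑ n, W (e i) κ * A κ n * W (e i) n) = 0 := by
          refine Finset.sum_eq_zero fun n _ => ?_
          rw [hWe, if_pos rfl]; ring
        rw [hz, zero_add]
        have hinner : ∀ m : Fin N, (∑ n, W (e i) (κ.succAbove m) * A (κ.succAbove m) n * W (e i) n)
            = ∑ n : Fin N, Q' i m * Matrix.diagonal (fun t : Fin N => lam' ((t:ℕ))) m n * Q' i n := by
          intro m
          rw [Fin.sum_univ_succAbove _ κ]
          have h0 : W (e i) (κ.succAbove m) * A (κ.succAbove m) κ * W (e i) κ = 0 := by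
            rw [hWe i κ, if_pos rfl]; ring
          rw [h0, zero_add]
          refine Finset.sum_congr rfl fun n _ => ?_
          rw [← hedef, hWee, hWee, hAee]
        rw [Finset.sum_congr rfl (fun m _ => hinner m), ← horn_triple_mul_apply, hQ'd i]
      -- orthogonality of R
      have hRo' : R * Rᵀ = 1 := by
        ext a b
        rw [Matrix.mul_apply]
        simp only [Matrix.transpose_apply]
        by_cases ha : a = κ
        · subst ha
          by_cases hb : b = κ
          · subst hb
            have hpt : ∀ m : Fin (N+1), R κ m * R κ m
                = (if m = κ then c*c else if m = κ' then s*s else 0) := by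
              intro m; rw [hRκ]; split_ifs <;> ring
            rw [Finset.sum_congr rfl (fun m _ => hpt m), horn_sum_double_if κ κ' hκκ',
              Matrix.one_apply_eq]
            linear_combination hcs1
          · by_cases hb' : b = κ'
            · subst hb'
              have hpt : ∀ m : Fin (N+1), R κ m * R κ' m
                  = (if m = κ then c*(-s) else if m = κ' then s*c else 0) := by
                intro m; rw [hRκ, hRκ']; split_ifs <;> ring
              rw [Finset.sum_congr rfl (fun m _ => hpt m), horn_sum_double_if κ κ' hκκ',
                Matrix.one_apply_ne hκκ']
              ring
            · rw [Matrix.one_apply_ne (Ne.symm hb)]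
              refine Finset.sum_eq_zero fun m _ => ?_
              rw [hRκ, hRrow b hb hb']
              split_ifs with h1 h2 h3 h4 h5
              · exact absurd (h2.symm.trans h1) hb
              · ring
              · exact absurd (h4.symm.trans h3) hb'
              · ring
              · ring
              · ring
        · by_cases ha' : a = κ'
          · subst ha'
            by_cases hb : b = κ
            · subst hb
              have hpt : ∀ m : Fin (N+1), R κ' m * R κ m
                  = (if m = κ then (-s)*c else if m = κ' then c*s else 0) := by
                intro m; rw [hRκ, hRκ']; split_ifs <;> ring
              rw [Finset.sum_congr rfl (fun m _ => hpt m), horn_sum_double_if κ κ' hκκ',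
                Matrix.one_apply_ne (Ne.symm hκκ')]
              ring
            · by_cases hb' : b = κ'
              · subst hb'
                have hpt : ∀ m : Fin (N+1), R κ' m * R κ' m
                    = (if m = κ then s*s else if m = κ' then c*c else 0) := by
                  intro m; rw [hRκ']; split_ifs <;> ring
                rw [Finset.sum_congr rfl (fun m _ => hpt m), horn_sum_double_if κ κ' hκκ',
                  Matrix.one_apply_eq]
                linear_combination hcs1
              · rw [Matrix.one_apply_ne (fun hh => Ne.symm hb' hh)]
                refine Finset.sum_eq_zero fun m _ => ?_
                rw [hRκ', hRrow b hb hb']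
                split_ifs with h1 h2 h3 h4 h5
                · exact absurd (h2.symm.trans h1) hb
                · ring
                · exact absurd (h4.symm.trans h3) hb'
                · ring
                · ring
                · ring
          · rw [Finset.sum_eq_single a ?_ (by simp)]
            · rw [hRrow a ha ha', if_pos rfl, one_mul]
              by_cases hb : b = κ
              · subst hb
                rw [hRκ, if_neg ha, if_neg ha', Matrix.one_apply_ne ha]
              · by_cases hb' : b = κ'
                · subst hb'
                  rw [hRκ', if_neg ha, if_neg ha', Matrix.one_apply_ne ha']
                · rw [hRrow b hb hb', Matrix.one_apply]
            · intro m _ hm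
              rw [hRrow a ha ha', if_neg hm]
              ring
      -- orthogonality of W
      have hWo' : W * Wᵀ = 1 := by
        ext a b
        rw [Matrix.mul_apply]
        simp only [Matrix.transpose_apply]
        by_cases ha : a = κ
        · subst ha
          by_cases hb : b = κ
          · subst hb
            rw [Finset.sum_eq_single κ ?_ (by simp)]
            · rw [hWκ, if_pos rfl, Matrix.one_apply_eq]; ring
            · intro m _ hm
              rw [hWκ, if_neg hm]; ring
          · rw [Matrix.one_apply_ne (fun hh => hb hh.symm)]
            obtain ⟨j, rfl⟩ := hesurj b hb
            refine Finset.sum_eq_zero fun m _ => ?_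
            rw [hWκ, hWe]
            split_ifs with h1
            · ring
            · ring
        · obtain ⟨i, rfl⟩ := hesurj a ha
          by_cases hb : b = κ
          · subst hb
            rw [Matrix.one_apply_ne ha]
            refine Finset.sum_eq_zero fun m _ => ?_
            rw [hWκ, hWe]
            split_ifs with h1
            · ring
            · ring
          · obtain ⟨j, rfl⟩ := hesurj b hb
            rw [Fin.sum_univ_succAbove _ κ]
            have h0 : W (e i) κ * W (e j) κ = 0 := by
              rw [hWe, if_pos rfl]; ring
            rw [h0, zero_add]
            have hpt : ∀ m : Fin N, W (e i) (κ.succAbove m) * W (e j) (κ.succAbove m)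
                = Q' i m * Q' j m := by
              intro m
              rw [← hedef, hWee, hWee]
            rw [Finset.sum_congr rfl (fun m _ => hpt m)]
            have : (Q' * Q'ᵀ) i j = ∑ m, Q' i m * Q' j m := by
              rw [Matrix.mul_apply]
              exact Finset.sum_congr rfl fun m _ => rfl
            rw [← this, hQ'o', Matrix.one_apply, Matrix.one_apply]
            by_cases hij : i = j
            · rw [if_pos hij, if_pos (hij ▸ rfl)]
            · rw [if_neg hij, if_neg (fun hh => hij (he_inj hh))]
      -- the permutation matrix
      set σfun : Fin (N+1) → Fin (N+1) := fun a => Fin.cases κ e a with hσdef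
      have hσ0 : σfun 0 = κ := rfl
      have hσs : ∀ i : Fin N, σfun i.succ = e i := fun i => rfl
      have hσinj : Function.Injective σfun := by
        intro a b h
        cases a using Fin.cases with
        | zero =>
          cases b using Fin.cases with
          | zero => rfl
          | succ j =>
            rw [hσ0, hσs] at h
            exact absurd h.symm (he_ne j)
        | succ i =>
          cases b using Fin.cases with
          | zero =>
            rw [hσ0, hσs] at h
            exact absurd h (he_ne i)
          | succ j =>
            rw [hσs, hσs] at h
            rw [he_inj h]
      set P : Matrix (Fin (N+1)) (Fin (N+1)) ℝ :=
        Matrix.of fun a b => if b = σfun a then 1 else 0 with hPdef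
      have hPentry : ∀ (Bm : Matrix (Fin (N+1)) (Fin (N+1)) ℝ) (a b : Fin (N+1)),
          (P * Bm * Pᵀ) a b = Bm (σfun a) (σfun b) := by
        intro Bm a b
        rw [horn_triple_mul_apply]
        rw [Finset.sum_eq_single (σfun a) ?_ (by simp)]
        · rw [Finset.sum_eq_single (σfun b) ?_ (by simp)]
          · simp [hPdef]
          · intro n _ hn
            have : P b n = 0 := by simp [hPdef, hn]
            rw [this]; ring
        · intro m _ hm
          refine Finset.sum_eq_zero fun n _ => ?_
          have : P a m = 0 := by simp [hPdef, hm]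
          rw [this]; ring
      have hPo' : P * Pᵀ = 1 := by
        ext a b
        have h1 := hPentry 1 a b
        rw [Matrix.mul_one] at h1
        rw [h1, Matrix.one_apply, Matrix.one_apply]
        by_cases hab : a = b
        · rw [if_pos hab, if_pos (hab ▸ rfl)]
        · rw [if_neg hab, if_neg (fun hh => hab (hσinj hh))]
      -- assemble
      refine ⟨P * W * R, ?_, ?_⟩
      · have h1 : Pᵀ * P = 1 := mul_eq_one_comm.mp hPo'
        have h2 : Wᵀ * W = 1 := mul_eq_one_comm.mp hWo'
        have h3 : Rᵀ * R = 1 := mul_eq_one_comm.mp hRo'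
        rw [Matrix.transpose_mul, Matrix.transpose_mul]
        calc Rᵀ * (Wᵀ * Pᵀ) * (P * W * R)
            = Rᵀ * (Wᵀ * (Pᵀ * (P * (W * R)))) := by
              simp only [Matrix.mul_assoc]
          _ = Rᵀ * (Wᵀ * (W * R)) := by
              rw [← Matrix.mul_assoc Pᵀ P, h1, Matrix.one_mul]
          _ = Rᵀ * R := by
              rw [← Matrix.mul_assoc Wᵀ W, h2, Matrix.one_mul]
          _ = 1 := h3
      · intro n
        have hGfact : (P * W * R) * Matrix.diagonal (fun i : Fin (N+1) => lam ((i:ℕ)))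
            * (P * W * R)ᵀ = P * (W * A * Wᵀ) * Pᵀ := by
          rw [hAdef, hDdef]
          simp only [Matrix.transpose_mul, Matrix.mul_assoc]
        rw [hGfact, hPentry]
        cases n using Fin.cases with
        | zero => rw [hσ0, hBκκ]; rfl
        | succ i => rw [hσs, hBee]; rfl

open Matrix Polynomial

lemma horn_roots_prod {n : ℕ} (f : Fin n → ℂ) :
    (∏ i, (X - C (f i))).roots = Finset.univ.val.map f := by
  have h1 : ∏ i, (X - C (f i)) = ((Finset.univ.val.map f).map (fun a => X - C a)).prod := by
    rw [Multiset.map_map, Finset.prod_eq_multiset_prod]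
    rfl
  rw [h1, Polynomial.roots_multiset_prod_X_sub_C]

lemma horn_filter_sum {N : ℕ} (f : Fin N → ℝ) (F : ℕ → ℝ)
    (hF : ∀ i : Fin N, F (i : ℕ) = f i) (j : ℕ) (hj : j ≤ N) :
    ∑ i ∈ Finset.range j, F i
      = ∑ i ∈ Finset.univ.filter (fun i : Fin N => (i : ℕ) < j), f i := by
  rw [Finset.sum_filter]
  have h2 := Fin.sum_univ_eq_sum_range (fun t => if t < j then F t else 0) N
  calc ∑ i ∈ Finset.range j, F i
      = ∑ t ∈ Finset.range N, (if t < j then F t else 0) := by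
        rw [← Finset.sum_filter]
        congr 1
        ext i
        simp only [Finset.mem_filter, Finset.mem_range]
        omega
    _ = ∑ i : Fin N, (if ((i : ℕ)) < j then F ((i : ℕ)) else 0) := h2.symm
    _ = ∑ i : Fin N, (if ((i : ℕ)) < j then f i else 0) := by
        refine Finset.sum_congr rfl fun i _ => ?_
        rw [hF]

theorem horn_exists_hermitian {N : ℕ}
    (lam mu : Fin N → ℝ)
    (hlam_anti : ∀ i j : Fin N, i ≤ j → lam j ≤ lam i)
    (hmu_anti : ∀ i j : Fin N, i ≤ j → mu j ≤ mu i)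
    (hmaj : (∀ k : ℕ, 1 ≤ k → k < N →
        ∑ i ∈ Finset.univ.filter (fun i : Fin N => (i : ℕ) < k), mu i ≤
        ∑ i ∈ Finset.univ.filter (fun i : Fin N => (i : ℕ) < k), lam i) ∧
      ∑ i, lam i = ∑ i, mu i) :
    ∃ G : Matrix (Fin N) (Fin N) ℂ, ∃ hG : G.IsHermitian,
      (∃ σ : Equiv.Perm (Fin N), ∀ i, hG.eigenvalues i = lam (σ i)) ∧
      ∀ n : Fin N, G n n = (mu n : ℂ) := by
  classical
  set Lam : ℕ → ℝ := fun i => if h : i < N then lam ⟨i, h⟩ else 0 with hLamdef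
  set Mu : ℕ → ℝ := fun i => if h : i < N then mu ⟨i, h⟩ else 0 with hMudef
  have hLam : ∀ i : Fin N, Lam (i : ℕ) = lam i := by
    intro i; simp [hLamdef, i.isLt]
  have hMu : ∀ i : Fin N, Mu (i : ℕ) = mu i := by
    intro i; simp [hMudef, i.isLt]
  have hLanti : ∀ i j, i ≤ j → j < N → Lam j ≤ Lam i := by
    intro i j hij hj
    have hi : i < N := lt_of_le_of_lt hij hj
    simp only [hLamdef, dif_pos hi, dif_pos hj]
    exact hlam_anti ⟨i, hi⟩ ⟨j, hj⟩ hij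
  have hManti : ∀ i j, i ≤ j → j < N → Mu j ≤ Mu i := by
    intro i j hij hj
    have hi : i < N := lt_of_le_of_lt hij hj
    simp only [hMudef, dif_pos hi, dif_pos hj]
    exact hmu_anti ⟨i, hi⟩ ⟨j, hj⟩ hij
  have htotal : ∑ i ∈ Finset.range N, Lam i = ∑ i ∈ Finset.range N, Mu i := by
    rw [horn_filter_sum lam Lam hLam N le_rfl, horn_filter_sum mu Mu hMu N le_rfl]
    have huniv : Finset.univ.filter (fun i : Fin N => (i : ℕ) < N) = Finset.univ := by
      ext i; simp [i.isLt]
    rw [huniv, hmaj.2]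
  have hsums : ∀ j, j ≤ N → ∑ i ∈ Finset.range j, Mu i ≤ ∑ i ∈ Finset.range j, Lam i := by
    intro j hj
    rcases Nat.eq_zero_or_pos j with rfl | hjpos
    · simp
    rcases eq_or_lt_of_le hj with rfl | hjlt
    · rw [htotal]
    rw [horn_filter_sum lam Lam hLam j hj, horn_filter_sum mu Mu hMu j hj]
    exact hmaj.1 j hjpos hjlt
  obtain ⟨Q, hQo, hQd⟩ := horn_main N Lam Mu hLanti hManti hsums htotal
  have hfun : (fun i : Fin N => Lam (i : ℕ)) = lam := funext hLam
  rw [hfun] at hQd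
  have hQo' : Q * Qᵀ = 1 := mul_eq_one_comm.mp hQo
  set M : Matrix (Fin N) (Fin N) ℝ := Q * Matrix.diagonal lam * Qᵀ with hMdef
  have hMsymm : Mᵀ = M := by
    rw [hMdef, Matrix.transpose_mul, Matrix.transpose_mul, Matrix.transpose_transpose,
      Matrix.diagonal_transpose, Matrix.mul_assoc]
  set G : Matrix (Fin N) (Fin N) ℂ := M.map (Complex.ofRealHom : ℝ →+* ℂ) with hGdef
  have hG : G.IsHermitian := by
    show Gᴴ = G
    ext i j
    simp only [hGdef, Matrix.conjTranspose_apply, Matrix.map_apply]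
    rw [show M i j = M j i from (congrFun (congrFun hMsymm i) j).symm]
    exact Complex.conj_ofReal _
  refine ⟨G, hG, ?_, ?_⟩
  · -- eigenvalues
    have hcM : M.charpoly = ∏ i, (X - C (lam i)) := by
      rw [hMdef, horn_charpoly_conj Q _ Qᵀ hQo', horn_charpoly_diagonal]
    have hcG : G.charpoly = ∏ i, (X - C ((lam i : ℂ))) := by
      rw [hGdef, Matrix.charpoly_map, hcM, Polynomial.map_prod]
      simp [Polynomial.map_sub]
    have hU := hG.spectral_theorem
    have hUo : (hG.eigenvectorUnitary : Matrix (Fin N) (Fin N) ℂ)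
        * star (hG.eigenvectorUnitary : Matrix (Fin N) (Fin N) ℂ) = 1 :=
      (Matrix.mem_unitaryGroup_iff).mp (hG.eigenvectorUnitary).2
    have hcG2 : G.charpoly = ∏ i, (X - C ((hG.eigenvalues i : ℂ))) := by
      conv_lhs => rw [hU, Unitary.conjStarAlgAut_apply]
      rw [horn_charpoly_conj _ _ _ hUo, horn_charpoly_diagonal]
      rfl
    have hroots : (Finset.univ.val.map (fun i => (hG.eigenvalues i : ℂ)) : Multiset ℂ)
        = Finset.univ.val.map (fun i => ((lam i : ℂ))) := by
      rw [← horn_roots_prod, ← horn_roots_prod, ← hcG, ← hcG2]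
    have hreal : (Finset.univ.val.map hG.eigenvalues : Multiset ℝ)
        = Finset.univ.val.map lam := by
      apply Multiset.map_injective (Complex.ofReal_injective)
      rw [Multiset.map_map, Multiset.map_map]
      exact hroots
    exact horn_exists_perm _ _ hreal
  · intro n
    have := hQd n
    simp only [hGdef, Matrix.map_apply]
    rw [this, hMu n]
    rfl
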